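/- For the star product Γ₁ ⊛ Γ₂ of two finite rooted graphs (Γ₁,o₁) and (Γ₂,o₂), the reciprocal Green functions satisfy F_{Γ₁⊛Γ₂}(z) = F_{Γ₁}(z) + F_{Γ₂}(z) - z for all z in the common domain where the Green functions are defined and nonzero. -/

import Mathlib

open Matrix
open Classical

/-- The adjacency matrix of a finite simple graph, with complex entries. -/
noncomputable def adjMat {V : Type*} [Fintype V] (G : SimpleGraph V) : Matrix V V ℂ :=
  Matrix.of fun i j => if G.Adj i j then 1 else 0

/-- The star product of two rooted graphs `(Γ₁,o₁)` and `(Γ₂,o₂)`: the two graphs are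
glued at their roots.  Vertices: those of `Γ₁` together with the non-root vertices of
`Γ₂`; the root of the star product is `o₁` (i.e. `Sum.inl o₁`). -/
def starProd {V₁ V₂ : Type*} (G₁ : SimpleGraph V₁) (o₁ : V₁)
    (G₂ : SimpleGraph V₂) (o₂ : V₂) : SimpleGraph (V₁ ⊕ {v : V₂ // v ≠ o₂}) where
  Adj u v :=
    match u, v with
    | Sum.inl a, Sum.inl b => G₁.Adj a b
    | Sum.inl a, Sum.inr b => a = o₁ ∧ G₂.Adj o₂ b.val
    | Sum.inr a, Sum.inl b => b = o₁ ∧ G₂.Adj o₂ a.val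
    | Sum.inr a, Sum.inr b => G₂.Adj a.val b.val
  symm := ⟨by
    rintro (a | a) (b | b) h
    · exact G₁.adj_symm h
    · exact h
    · exact h
    · exact G₂.adj_symm h⟩
  loopless := ⟨by
    rintro (a | a) h
    · exact G₁.irrefl h
    · exact G₂.irrefl h⟩

lemma sum_split' {V : Type*} [Fintype V] [DecidableEq V] (o : V) (f : V → ℂ) :
    ∑ c, f c = f o + ∑ c : {v : V // v ≠ o}, f ↑c := by
  rw [← Finset.sum_subtype (Finset.univ \ {o}) (fun x => by simp) f,
    Finset.sum_eq_sum_sdiff_singleton_add (Finset.mem_univ o) f, add_comm]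

section tests
variable {V₁ V₂ : Type*} [Fintype V₁] [Fintype V₂] [DecidableEq V₁] [DecidableEq V₂]
  {G₁ : SimpleGraph V₁} {o₁ : V₁} {G₂ : SimpleGraph V₂} {o₂ : V₂}

lemma adj_ll (a b : V₁) : adjMat (starProd G₁ o₁ G₂ o₂) (Sum.inl a) (Sum.inl b)
    = if G₁.Adj a b then 1 else 0 := rfl

lemma adj_lr (a : V₁) (b : {v : V₂ // v ≠ o₂}) : adjMat (starProd G₁ o₁ G₂ o₂) (Sum.inl a) (Sum.inr b)
    = if a = o₁ ∧ G₂.Adj o₂ ↑b then 1 else 0 := if_congr Iff.rfl rfl rfl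

lemma adj_rl (a : V₁) (b : {v : V₂ // v ≠ o₂}) : adjMat (starProd G₁ o₁ G₂ o₂) (Sum.inr b) (Sum.inl a)
    = if a = o₁ ∧ G₂.Adj o₂ ↑b then 1 else 0 := if_congr Iff.rfl rfl rfl

lemma adj_rr (a b : {v : V₂ // v ≠ o₂}) : adjMat (starProd G₁ o₁ G₂ o₂) (Sum.inr a) (Sum.inr b)
    = if G₂.Adj ↑a ↑b then 1 else 0 := rfl

example (a b : V₁) : adjMat (starProd G₁ o₁ G₂ o₂) (Sum.inl a) (Sum.inl b)
    = if G₁.Adj a b then 1 else 0 := rfl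

example (a : V₁) (b : {v : V₂ // v ≠ o₂}) : adjMat (starProd G₁ o₁ G₂ o₂) (Sum.inl a) (Sum.inr b)
    = if a = o₁ ∧ G₂.Adj o₂ ↑b then 1 else 0 := if_congr Iff.rfl rfl rfl

example (a : V₁) (b : {v : V₂ // v ≠ o₂}) : adjMat (starProd G₁ o₁ G₂ o₂) (Sum.inr b) (Sum.inl a)
    = if a = o₁ ∧ G₂.Adj o₂ ↑b then 1 else 0 := if_congr Iff.rfl rfl rfl

example (a b : {v : V₂ // v ≠ o₂}) : adjMat (starProd G₁ o₁ G₂ o₂) (Sum.inr a) (Sum.inr b)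
    = if G₂.Adj ↑a ↑b then 1 else 0 := rfl
end tests

/-- The Boolean linearization formula for the Green functions of a star product of
rooted graphs: `F_{Γ₁ ⊛ Γ₂}(z) = F_{Γ₁}(z) + F_{Γ₂}(z) - z`, on the common domain
where the Green functions `G_Γ(z) = ⟨(zI - A_Γ)⁻¹ δ_o, δ_o⟩` are defined
(the resolvents exist) and nonzero; `F_Γ = 1/G_Γ`. -/
theorem F_starProd {V₁ V₂ : Type*} [Fintype V₁] [Fintype V₂]
    [DecidableEq V₁] [DecidableEq V₂]
    (G₁ : SimpleGraph V₁) (o₁ : V₁) (G₂ : SimpleGraph V₂) (o₂ : V₂) (z : ℂ)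
    (h1 : IsUnit (z • (1 : Matrix V₁ V₁ ℂ) - adjMat G₁))
    (h2 : IsUnit (z • (1 : Matrix V₂ V₂ ℂ) - adjMat G₂))
    (h3 : IsUnit (z • (1 : Matrix (V₁ ⊕ {v : V₂ // v ≠ o₂}) (V₁ ⊕ {v : V₂ // v ≠ o₂}) ℂ)
      - adjMat (starProd G₁ o₁ G₂ o₂)))
    (hg1 : (z • (1 : Matrix V₁ V₁ ℂ) - adjMat G₁)⁻¹ o₁ o₁ ≠ 0)
    (hg2 : (z • (1 : Matrix V₂ V₂ ℂ) - adjMat G₂)⁻¹ o₂ o₂ ≠ 0)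
    (hg3 : (z • (1 : Matrix (V₁ ⊕ {v : V₂ // v ≠ o₂}) (V₁ ⊕ {v : V₂ // v ≠ o₂}) ℂ)
      - adjMat (starProd G₁ o₁ G₂ o₂))⁻¹ (Sum.inl o₁) (Sum.inl o₁) ≠ 0) :
    ((z • (1 : Matrix (V₁ ⊕ {v : V₂ // v ≠ o₂}) (V₁ ⊕ {v : V₂ // v ≠ o₂}) ℂ)
        - adjMat (starProd G₁ o₁ G₂ o₂))⁻¹ (Sum.inl o₁) (Sum.inl o₁))⁻¹
      = ((z • (1 : Matrix V₁ V₁ ℂ) - adjMat G₁)⁻¹ o₁ o₁)⁻¹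
        + ((z • (1 : Matrix V₂ V₂ ℂ) - adjMat G₂)⁻¹ o₂ o₂)⁻¹ - z := by
  set M₁ := z • (1 : Matrix V₁ V₁ ℂ) - adjMat G₁ with hM₁def
  set M₂ := z • (1 : Matrix V₂ V₂ ℂ) - adjMat G₂ with hM₂def
  set M₃ := z • (1 : Matrix (V₁ ⊕ {v : V₂ // v ≠ o₂}) (V₁ ⊕ {v : V₂ // v ≠ o₂}) ℂ)
      - adjMat (starProd G₁ o₁ G₂ o₂) with hM₃def
  have hd1 := (Matrix.isUnit_iff_isUnit_det M₁).mp h1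
  have hd2 := (Matrix.isUnit_iff_isUnit_det M₂).mp h2
  have hd3 := (Matrix.isUnit_iff_isUnit_det M₃).mp h3
  set x' : V₂ → ℂ := fun b => M₂⁻¹ b o₂ with hx'def
  set u : V₁ → ℂ := fun a => M₃⁻¹ (Sum.inl a) (Sum.inl o₁) with hudef
  set v : {v : V₂ // v ≠ o₂} → ℂ := fun b => M₃⁻¹ (Sum.inr b) (Sum.inl o₁) with hvdef
  -- row equations for M₂
  have hrow2 : ∀ b : V₂, z * x' b - ∑ c, (if G₂.Adj b c then (1:ℂ) else 0) * x' c
      = if b = o₂ then 1 else 0 := by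
    intro b
    have h := congrFun (congrFun (Matrix.mul_nonsing_inv M₂ hd2) b) o₂
    rw [Matrix.mul_apply] at h
    simp only [hM₂def, Matrix.sub_apply, Matrix.smul_apply, Matrix.one_apply, adjMat,
      Matrix.of_apply, smul_eq_mul, sub_mul, ite_mul, one_mul, zero_mul, mul_ite, mul_one,
      mul_zero, Finset.sum_sub_distrib, Finset.sum_ite_eq, Finset.mem_univ, if_true] at h ⊢
    convert h using 2
    all_goals rfl
  -- row equations for M₃, left block
  have hrow3l : ∀ a : V₁, z * u a - ∑ c, (if G₁.Adj a c then (1:ℂ) else 0) * u c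
      - (if a = o₁ then ∑ b : {v : V₂ // v ≠ o₂}, (if G₂.Adj o₂ ↑b then (1:ℂ) else 0) * v b else 0)
      = if a = o₁ then 1 else 0 := by
    intro a
    have h := congrFun (congrFun (Matrix.mul_nonsing_inv M₃ hd3) (Sum.inl a)) (Sum.inl o₁)
    rw [Matrix.mul_apply, Fintype.sum_sum_type] at h
    simp only [hM₃def, Matrix.sub_apply, Matrix.smul_apply, Matrix.one_apply, adj_ll, adj_lr,
      smul_eq_mul, Sum.inl.injEq, reduceCtorEq, if_false, ite_and, sub_mul, ite_mul, one_mul,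
      zero_mul, mul_ite, mul_one, mul_zero, Finset.sum_sub_distrib, Finset.sum_ite_eq,
      Finset.mem_univ, if_true, zero_sub, Finset.sum_neg_distrib] at h
    rw [← hM₃def] at h
    by_cases ha : a = o₁ <;>
      simp only [ha, if_true, if_false, ite_mul, one_mul, zero_mul, neg_mul, neg_zero,
        Finset.sum_neg_distrib, Finset.sum_const_zero, add_zero, sub_zero] at h ⊢ <;>
      linear_combination h
  -- row equations for M₃, right block
  have hrow3r : ∀ b : {v : V₂ // v ≠ o₂},
      z * v b - (if G₂.Adj o₂ ↑b then (1:ℂ) else 0) * u o₁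
        - ∑ c : {v : V₂ // v ≠ o₂}, (if G₂.Adj ↑b ↑c then (1:ℂ) else 0) * v c = 0 := by
    intro b
    have h := congrFun (congrFun (Matrix.mul_nonsing_inv M₃ hd3) (Sum.inr b)) (Sum.inl o₁)
    rw [Matrix.mul_apply, Fintype.sum_sum_type] at h
    simp only [hM₃def, Matrix.sub_apply, Matrix.smul_apply, Matrix.one_apply, adj_rl, adj_rr,
      smul_eq_mul, Sum.inr.injEq, Sum.inl.injEq, reduceCtorEq, if_false, ite_and, sub_mul,
      ite_mul, one_mul, zero_mul, mul_ite, mul_one, mul_zero, Finset.sum_sub_distrib,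
      Finset.sum_ite_eq, Finset.mem_univ, if_true, zero_sub, Finset.sum_neg_distrib] at h
    rw [← hM₃def] at h
    simp only [neg_mul, ite_mul, one_mul, zero_mul, Finset.sum_neg_distrib,
      Finset.sum_ite_eq', Finset.mem_univ, if_true] at h ⊢
    linear_combination h
  -- glue vector on V₂
  set vh : V₂ → ℂ := fun b => if h : b = o₂ then u o₁ else v ⟨b, h⟩ with hvhdef
  have hvhc : ∀ c : {v : V₂ // v ≠ o₂}, vh ↑c = v c := by
    intro c
    simp only [hvhdef, dif_neg c.prop]
  have hvho : vh o₂ = u o₁ := by simp [hvhdef]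
  set s := z * u o₁ - ∑ c : {v : V₂ // v ≠ o₂}, (if G₂.Adj o₂ ↑c then (1:ℂ) else 0) * v c
    with hsdef
  have hMvh : M₂.mulVec vh = Pi.single o₂ s := by
    funext b
    have expand : M₂.mulVec vh b
        = z * vh b - ∑ c, (if G₂.Adj b c then (1:ℂ) else 0) * vh c := by
      simp only [Matrix.mulVec, dotProduct, hM₂def, Matrix.sub_apply, Matrix.smul_apply,
        Matrix.one_apply, adjMat, Matrix.of_apply, smul_eq_mul, sub_mul, mul_ite, mul_one,
        mul_zero, ite_mul, one_mul, zero_mul, Finset.sum_sub_distrib, Finset.sum_ite_eq,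
        Finset.mem_univ, if_true]
    rw [expand, sum_split' o₂ (fun c => (if G₂.Adj b c then (1:ℂ) else 0) * vh c)]
    by_cases hb : b = o₂
    · subst hb
      simp only [Pi.single_eq_same, hvho, SimpleGraph.irrefl, if_false, zero_mul, zero_add]
      simp only [hsdef]
      congr 1
      exact Finset.sum_congr rfl fun c _ => by rw [hvhc c]
    · rw [Pi.single_eq_of_ne hb]
      have hb' : vh b = v ⟨b, hb⟩ := by simp only [hvhdef, dif_neg hb]
      have hsum : ∑ c : {v : V₂ // v ≠ o₂}, (if G₂.Adj b ↑c then (1:ℂ) else 0) * vh ↑c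
          = ∑ c : {v : V₂ // v ≠ o₂}, (if G₂.Adj b ↑c then (1:ℂ) else 0) * v c :=
        Finset.sum_congr rfl fun c _ => by rw [hvhc c]
      rw [hb', hvho, hsum, if_congr (G₂.adj_comm b o₂) rfl rfl]
      linear_combination hrow3r ⟨b, hb⟩
  have hvheq : vh = fun b => x' b * s := by
    have h0 : M₂⁻¹.mulVec (M₂.mulVec vh) = vh := by
      rw [Matrix.mulVec_mulVec, Matrix.nonsing_inv_mul M₂ hd2, Matrix.one_mulVec]
    rw [hMvh, Matrix.mulVec_single] at h0
    exact h0.symm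
  have hus : u o₁ = x' o₂ * s := by rw [← hvho, hvheq]
  have hvs : ∀ c : {v : V₂ // v ≠ o₂}, v c = x' ↑c * s := by
    intro c; rw [← hvhc c, hvheq]
  have hq : ∑ c : {v : V₂ // v ≠ o₂}, (if G₂.Adj o₂ ↑c then (1:ℂ) else 0) * x' ↑c
      = z * x' o₂ - 1 := by
    have h := hrow2 o₂
    rw [sum_split' o₂ (fun c => (if G₂.Adj o₂ c then (1:ℂ) else 0) * x' c)] at h
    simp only [SimpleGraph.irrefl, if_false, zero_mul, zero_add, if_pos rfl, eq_self_iff_true,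
      if_true] at h
    linear_combination -h
  have hsv : ∑ c : {v : V₂ // v ≠ o₂}, (if G₂.Adj o₂ ↑c then (1:ℂ) else 0) * v c
      = (z * x' o₂ - 1) * s := by
    rw [← hq, Finset.sum_mul]
    exact Finset.sum_congr rfl fun c _ => by rw [hvs c, mul_assoc]
  set t := 1 + (z * x' o₂ - 1) * s with htdef
  have hMu : M₁.mulVec u = Pi.single o₁ t := by
    funext a
    have expand : M₁.mulVec u a = z * u a - ∑ c, (if G₁.Adj a c then (1:ℂ) else 0) * u c := by
      simp only [Matrix.mulVec, dotProduct, hM₁def, Matrix.sub_apply, Matrix.smul_apply,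
        Matrix.one_apply, adjMat, Matrix.of_apply, smul_eq_mul, sub_mul, mul_ite, mul_one,
        mul_zero, ite_mul, one_mul, zero_mul, Finset.sum_sub_distrib, Finset.sum_ite_eq,
        Finset.mem_univ, if_true]
    rw [expand]
    have h := hrow3l a
    by_cases ha : a = o₁
    · subst ha
      rw [if_pos rfl, if_pos rfl] at h
      rw [Pi.single_eq_same, htdef]
      linear_combination h + hsv
    · rw [Pi.single_eq_of_ne ha]
      rw [if_neg ha, if_neg ha, sub_zero] at h
      linear_combination h
  have hueq : u = fun a => M₁⁻¹ a o₁ * t := by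
    have h0 : M₁⁻¹.mulVec (M₁.mulVec u) = u := by
      rw [Matrix.mulVec_mulVec, Matrix.nonsing_inv_mul M₁ hd1, Matrix.one_mulVec]
    rw [hMu, Matrix.mulVec_single] at h0
    exact h0.symm
  -- final algebra
  have e1 : M₃⁻¹ (Sum.inl o₁) (Sum.inl o₁) = M₁⁻¹ o₁ o₁ * t := congrFun hueq o₁
  have e2 : M₃⁻¹ (Sum.inl o₁) (Sum.inl o₁) = M₂⁻¹ o₂ o₂ * s := hus
  have e3 : t = 1 + z * (M₃⁻¹ (Sum.inl o₁) (Sum.inl o₁)) - s := by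
    rw [htdef]
    linear_combination (-z) * e2
  have hs0 : s ≠ 0 := by
    intro h; exact hg3 (by rw [e2, h, mul_zero])
  have ht0 : t ≠ 0 := by
    intro h; exact hg3 (by rw [e1, h, mul_zero])
  have A : M₃⁻¹ (Sum.inl o₁) (Sum.inl o₁) * (M₁⁻¹ o₁ o₁)⁻¹ = t := by
    rw [e1, mul_comm (M₁⁻¹ o₁ o₁) t, mul_assoc, mul_inv_cancel₀ hg1, mul_one]
  have B : M₃⁻¹ (Sum.inl o₁) (Sum.inl o₁) * (M₂⁻¹ o₂ o₂)⁻¹ = s := by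
    rw [e2, mul_comm (M₂⁻¹ o₂ o₂) s, mul_assoc, mul_inv_cancel₀ hg2, mul_one]
  apply inv_eq_of_mul_eq_one_right
  rw [mul_sub, mul_add, A, B]
  linear_combination e3
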